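/- Let T be a regular simplicial triangulation of a polygonal/polyhedral domain Ω ⊂ R^d with regularity parameter θ ≥ θ_0 > 0, and let v be a function in the Crouzeix–Raviart space V_h (piecewise affine on each simplex, with continuous mean value across each internal face and zero mean on boundary faces). Then Σ_{σ∈E} (1/h_σ)·∫_σ [v]^2 dγ ≤ c(θ_0)·Σ_{K∈T} ∫_K |∇v|^2 dx, where [v] denotes the jump of v across an internal face σ and [v] = v on boundary faces, and c(θ_0) depends only on θ_0. -/

import Mathlib

open MeasureTheory Set

noncomputable section

/-- Euclidean space `ℝ^d`. -/
abbrev Euc (d : ℕ) := EuclideanSpace ℝ (Fin d)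

/-- The (closed) simplex with vertices `p 0, …, p d`. -/
def cellSet {d : ℕ} (p : Fin (d + 1) → Euc d) : Set (Euc d) :=
  convexHull ℝ (Set.range p)

/-- The face of the simplex with vertices `p` opposite to the vertex `p i`. -/
def faceSet {d : ℕ} (p : Fin (d + 1) → Euc d) (i : Fin (d + 1)) : Set (Euc d) :=
  convexHull ℝ (p '' ({i}ᶜ : Set (Fin (d + 1))))

/-- The affine function `x ↦ ⟪g, x⟫ + b` on `ℝ^d`. -/
def affFn {d : ℕ} (g : Euc d) (b : ℝ) : Euc d → ℝ := fun x => (inner ℝ g x : ℝ) + b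

/-- A conforming simplicial mesh of a polygonal/polyhedral domain `Ω ⊂ ℝ^d`:
a finite family of nondegenerate simplices with pairwise disjoint interiors covering
`closure Ω`, such that two distinct cells meet in the empty set, a common vertex, or a
common face. -/
structure Mesh (d : ℕ) (Ω : Set (Euc d)) where
  cells : Finset (Fin (d + 1) → Euc d)
  indep : ∀ p ∈ cells, AffineIndependent ℝ p
  cover : closure Ω = ⋃ p ∈ cells, cellSet p
  disjoint_interiors : ∀ p ∈ cells, ∀ q ∈ cells, p ≠ q →
    interior (cellSet p) ∩ interior (cellSet q) = ∅
  conforming : ∀ p ∈ cells, ∀ q ∈ cells, p ≠ q →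
    cellSet p ∩ cellSet q = ∅ ∨ (∃ x, cellSet p ∩ cellSet q = {x}) ∨
      ∃ i j, faceSet p i = faceSet q j ∧ cellSet p ∩ cellSet q = faceSet p i

/-- The set of all faces (edges if `d = 2`) of the mesh. -/
def Mesh.faces {d : ℕ} {Ω : Set (Euc d)} (M : Mesh d Ω) : Finset (Set (Euc d)) :=
  letI : DecidableEq (Set (Euc d)) := Classical.decEq _
  (M.cells ×ˢ (Finset.univ : Finset (Fin (d + 1)))).image fun pi => faceSet pi.1 pi.2

/-- A face is internal when it is a common face of two distinct cells. -/
def Mesh.InternalFace {d : ℕ} {Ω : Set (Euc d)} (M : Mesh d Ω) (σ : Set (Euc d)) : Prop :=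
  ∃ p ∈ M.cells, ∃ q ∈ M.cells, p ≠ q ∧
    (∃ i, σ = faceSet p i) ∧ ∃ j, σ = faceSet q j

/-- Mesh regularity `θ ≥ θ₀`: every cell contains a ball of diameter `θ₀ · h_K`, and the
diameters of two cells sharing a face are comparable with ratio at least `θ₀`. -/
def Mesh.Regular {d : ℕ} {Ω : Set (Euc d)} (M : Mesh d Ω) (θ0 : ℝ) : Prop :=
  (∀ p ∈ M.cells, ∃ x : Euc d,
      Metric.ball x (θ0 * Metric.diam (cellSet p) / 2) ⊆ cellSet p) ∧
  ∀ p ∈ M.cells, ∀ q ∈ M.cells, (∃ i j, faceSet p i = faceSet q j) →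
    θ0 * Metric.diam (cellSet p) ≤ Metric.diam (cellSet q)

/-- Mean-value continuity across internal faces of the piecewise affine function with
pieces `affFn (g p) (b p)` (Crouzeix–Raviart condition). -/
def Mesh.CRContinuous {d : ℕ} {Ω : Set (Euc d)} (M : Mesh d Ω)
    (g : (Fin (d + 1) → Euc d) → Euc d) (b : (Fin (d + 1) → Euc d) → ℝ) : Prop :=
  ∀ p ∈ M.cells, ∀ q ∈ M.cells, ∀ i j, faceSet p i = faceSet q j →
    ∫ x in faceSet p i, affFn (g p) (b p) x ∂μH[(d : ℝ) - 1] =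
      ∫ x in faceSet p i, affFn (g q) (b q) x ∂μH[(d : ℝ) - 1]

/-- Zero mean value on boundary (non-internal) faces (Crouzeix–Raviart boundary
condition). -/
def Mesh.CRBoundary {d : ℕ} {Ω : Set (Euc d)} (M : Mesh d Ω)
    (g : (Fin (d + 1) → Euc d) → Euc d) (b : (Fin (d + 1) → Euc d) → ℝ) : Prop :=
  ∀ p ∈ M.cells, ∀ i, ¬ M.InternalFace (faceSet p i) →
    ∫ x in faceSet p i, affFn (g p) (b p) x ∂μH[(d : ℝ) - 1] = 0

/-- Square of the broken `H¹` seminorm of the piecewise affine function with cellwise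
gradients `g p`. -/
def Mesh.brokenSq {d : ℕ} {Ω : Set (Euc d)} (M : Mesh d Ω)
    (g : (Fin (d + 1) → Euc d) → Euc d) : ℝ :=
  ∑ p ∈ M.cells, (volume (cellSet p)).toReal * ‖g p‖ ^ 2

end

open scoped NNReal ENNReal

noncomputable section

lemma faceSet_eq_range {n : ℕ} (p : Fin (n + 1 + 1) → Euc (n + 1)) (i : Fin (n + 1 + 1)) :
    faceSet p i = convexHull ℝ (Set.range (p ∘ i.succAbove)) := by
  rw [faceSet, ← Fin.range_succAbove i, Set.range_comp]

lemma faceSet_isCompact {d : ℕ} (p : Fin (d + 1) → Euc d) (i : Fin (d + 1)) :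
    IsCompact (faceSet p i) :=
  Set.Finite.isCompact_convexHull ℝ ((Set.toFinite _).image p)

lemma cellSet_isCompact {d : ℕ} (p : Fin (d + 1) → Euc d) :
    IsCompact (cellSet p) :=
  Set.Finite.isCompact_convexHull ℝ (Set.finite_range p)

lemma faceSet_subset_cellSet {d : ℕ} (p : Fin (d + 1) → Euc d) (i : Fin (d + 1)) :
    faceSet p i ⊆ cellSet p :=
  convexHull_mono (Set.image_subset_range p _)

lemma diam_faceSet_le {d : ℕ} (p : Fin (d + 1) → Euc d) (i : Fin (d + 1)) :
    Metric.diam (faceSet p i) ≤ Metric.diam (cellSet p) :=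
  Metric.diam_mono (faceSet_subset_cellSet p i) (cellSet_isCompact p).isBounded

lemma vol_cell_lower {n : ℕ} (θ0 : ℝ) (hθ : 0 < θ0) (p : Fin (n + 1 + 1) → Euc (n + 1))
    (x : Euc (n + 1))
    (hball : Metric.ball x (θ0 * Metric.diam (cellSet p) / 2) ⊆ cellSet p) :
    Metric.diam (cellSet p) ^ (n + 1) ≤
      (volume (cellSet p)).toReal * (2 / θ0) ^ (n + 1) /
        (volume (Metric.ball (0 : Euc (n + 1)) 1)).toReal := by
  set H := Metric.diam (cellSet p) with hH
  have hH0 : 0 ≤ H := Metric.diam_nonneg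
  set r := θ0 * H / 2 with hr
  have hr0 : 0 ≤ r := by positivity
  set cb := (volume (Metric.ball (0 : Euc (n + 1)) 1)).toReal with hcb
  have hcbpos : 0 < cb :=
    ENNReal.toReal_pos (Metric.measure_ball_pos volume 0 one_pos).ne' measure_ball_lt_top.ne
  have hballvol : volume (Metric.ball x r) =
      ENNReal.ofReal (r ^ (n + 1)) * volume (Metric.ball (0 : Euc (n + 1)) 1) := by
    rw [Measure.addHaar_ball volume x hr0, finrank_euclideanSpace_fin]
  have hfin : volume (cellSet p) ≠ ⊤ := (cellSet_isCompact p).measure_lt_top.ne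
  have hmono : volume (Metric.ball x r) ≤ volume (cellSet p) := measure_mono hball
  have hkey : r ^ (n + 1) * cb ≤ (volume (cellSet p)).toReal := by
    have := ENNReal.toReal_mono hfin hmono
    rwa [hballvol, ENNReal.toReal_mul, ENNReal.toReal_ofReal (by positivity)] at this
  have hHr : H = r * (2 / θ0) := by rw [hr]; field_simp
  calc H ^ (n + 1) = r ^ (n + 1) * (2 / θ0) ^ (n + 1) := by rw [hHr, mul_pow]
    _ ≤ ((volume (cellSet p)).toReal / cb) * (2 / θ0) ^ (n + 1) := by
        apply mul_le_mul_of_nonneg_right _ (by positivity)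
        rw [le_div_iff₀ hcbpos]
        exact hkey
    _ = (volume (cellSet p)).toReal * (2 / θ0) ^ (n + 1) / cb := by ring

lemma hmeas_convexHull_le {n : ℕ} (y : Fin (n + 1) → Euc (n + 1)) :
    μH[(n:ℝ)] (convexHull ℝ (Set.range y)) ≤
      ENNReal.ofReal ((n * Metric.diam (convexHull ℝ (Set.range y))) ^ n) := by
  set S := convexHull ℝ (Set.range y) with hS
  have hSb : Bornology.IsBounded S := isBounded_convexHull.2 (Set.finite_range y).isBounded
  set L := Metric.diam S with hL
  have hL0 : 0 ≤ L := Metric.diam_nonneg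
  set Δ : Fin n → Euc (n + 1) := fun k => y k.succ - y 0 with hΔ
  have hΔle : ∀ k, ‖Δ k‖ ≤ L := by
    intro k
    have h1 : y k.succ ∈ S := subset_convexHull ℝ _ ⟨k.succ, rfl⟩
    have h2 : y 0 ∈ S := subset_convexHull ℝ _ ⟨0, rfl⟩
    simpa [hΔ, dist_eq_norm] using Metric.dist_le_diam_of_mem hSb h1 h2
  set f : (Fin n → ℝ) → Euc (n + 1) := fun t => y 0 + ∑ k, t k • Δ k with hf
  have hlip : LipschitzWith (Real.toNNReal (n * L)) f := by
    apply LipschitzWith.of_dist_le_mul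
    intro t s
    rw [Real.coe_toNNReal _ (by positivity : (0:ℝ) ≤ n * L)]
    have hdiff : f t - f s = ∑ k, (t k - s k) • Δ k := by
      simp [hf, ← Finset.sum_sub_distrib, sub_smul]
    rw [dist_eq_norm, hdiff]
    calc ‖∑ k, (t k - s k) • Δ k‖ ≤ ∑ k, ‖(t k - s k) • Δ k‖ := norm_sum_le _ _
      _ ≤ ∑ _k : Fin n, dist t s * L := by
          apply Finset.sum_le_sum
          intro k _
          rw [norm_smul]
          apply mul_le_mul _ (hΔle k) (norm_nonneg _) dist_nonneg
          rw [Real.norm_eq_abs, ← Real.dist_eq]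
          exact dist_le_pi_dist t s k
      _ = n * L * dist t s := by simp [Finset.sum_const]; ring
  have hcover : S ⊆ f '' (Set.Icc (0 : Fin n → ℝ) 1) := by
    intro x hx
    rw [hS, convexHull_range_eq_exists_affineCombination] at hx
    obtain ⟨s, w, hw0, hw1, hwx⟩ := hx
    classical
    set W : Fin (n + 1) → ℝ := fun i => if i ∈ s then w i else 0 with hW
    have hW0 : ∀ i, 0 ≤ W i := by
      intro i; by_cases h : i ∈ s <;> simp [hW, h, hw0 i]
    have hWs : ∑ i, W i = 1 := by
      rw [← hw1, hW]
      rw [Finset.sum_ite_mem]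
      simp [Finset.inter_comm]
    have hxW : x = ∑ i, W i • y i := by
      rw [← hwx, Finset.affineCombination_eq_linear_combination _ _ _ hw1]
      have hcongr : ∀ i ∈ s, w i • y i = W i • y i := fun i hi => by simp [hW, hi]
      rw [Finset.sum_congr rfl hcongr]
      exact Finset.sum_subset (Finset.subset_univ s) (fun i _ hi => by simp [hW, hi])
    have hsum : ∑ k : Fin n, W k.succ = 1 - W 0 := by
      have h := hWs; rw [Fin.sum_univ_succ] at h; linarith
    refine ⟨fun k => W k.succ, ?_, ?_⟩
    · constructor <;> intro k
      · exact hW0 _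
      · calc W k.succ ≤ ∑ i, W i := Finset.single_le_sum (fun i _ => hW0 i) (Finset.mem_univ _)
          _ = 1 := hWs
    · rw [hxW, hf]
      have h1 : ∑ k : Fin n, W k.succ • Δ k
          = ∑ k : Fin n, W k.succ • y k.succ - (1 - W 0) • y 0 := by
        rw [← hsum, Finset.sum_smul, ← Finset.sum_sub_distrib]
        exact Finset.sum_congr rfl fun k _ => smul_sub _ _ _
      rw [Fin.sum_univ_succ]
      simp only []
      rw [h1]
      module
  calc μH[(n:ℝ)] S ≤ μH[(n:ℝ)] (f '' (Set.Icc 0 1)) := measure_mono hcover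
    _ ≤ ((Real.toNNReal (n * L) : ℝ≥0) : ℝ≥0∞) ^ (n:ℝ) * μH[(n:ℝ)] (Set.Icc (0 : Fin n → ℝ) 1) :=
        hlip.hausdorffMeasure_image_le (by positivity) _
    _ = ENNReal.ofReal ((n * L) ^ n) := by
        have hpi : μH[(n:ℝ)] (Set.Icc (0 : Fin n → ℝ) 1) = 1 := by
          have h := hausdorffMeasure_pi_real (ι := Fin n)
          rw [Fintype.card_fin] at h
          rw [h, Real.volume_Icc_pi]
          simp
        rw [hpi, mul_one, ENNReal.rpow_natCast, ← ENNReal.coe_pow,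
          ← Real.toNNReal_pow (by positivity)]
        simp [ENNReal.ofReal]

lemma faceSet_hmeas_le {n : ℕ} (p : Fin (n + 1 + 1) → Euc (n + 1)) (i : Fin (n + 1 + 1)) :
    μH[((n + 1 : ℕ) : ℝ) - 1] (faceSet p i) ≤
      ENNReal.ofReal ((n * Metric.diam (faceSet p i)) ^ n) := by
  have hc : ((n + 1 : ℕ) : ℝ) - 1 = (n : ℝ) := by push_cast; ring
  rw [hc, faceSet_eq_range]
  exact hmeas_convexHull_le _

lemma affFn_continuous {d : ℕ} (g : Euc d) (b : ℝ) : Continuous (affFn g b) := by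
  unfold affFn
  exact (continuous_const.inner continuous_id).add continuous_const

lemma affFn_integrableOn {d : ℕ} (μ : Measure (Euc d)) (σ : Set (Euc d))
    (hσc : IsCompact σ) (hμ : μ σ ≠ ⊤) (G : Euc d) (B : ℝ) :
    IntegrableOn (affFn G B) σ μ := by
  obtain ⟨C, hC⟩ := hσc.exists_bound_of_continuousOn (affFn_continuous G B).continuousOn
  exact Measure.integrableOn_of_bounded hμ (affFn_continuous G B).aestronglyMeasurable
    ((ae_restrict_iff' hσc.isClosed.measurableSet).2 (ae_of_all _ hC))

lemma sq_int_le_of_zero_mean {d : ℕ} (μ : Measure (Euc d)) (σ : Set (Euc d))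
    (hσc : IsCompact σ) (hμ : μ σ ≠ ⊤) (G : Euc d) (B : ℝ)
    (h0 : ∫ x in σ, affFn G B x ∂μ = 0) :
    ∫ x in σ, (affFn G B x) ^ 2 ∂μ ≤ (μ σ).toReal * (‖G‖ * Metric.diam σ) ^ 2 := by
  rcases Set.eq_empty_or_nonempty σ with hemp | ⟨x₀, hx₀⟩
  · rw [hemp]
    simp
  set fc := affFn G B with hfc
  have hcont : Continuous fc := affFn_continuous G B
  have hmeas : MeasurableSet σ := hσc.isClosed.measurableSet
  obtain ⟨C, hC⟩ := hσc.exists_bound_of_continuousOn hcont.continuousOn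
  have hint1 : IntegrableOn fc σ μ := affFn_integrableOn μ σ hσc hμ G B
  have hint2 : IntegrableOn (fun x => fc x ^ 2) σ μ := by
    refine Measure.integrableOn_of_bounded (M := (max C 0) ^ 2) hμ
      ((hcont.pow 2).aestronglyMeasurable) ((ae_restrict_iff' hmeas).2 (ae_of_all _ ?_))
    intro x hx
    rw [Real.norm_eq_abs, abs_pow]
    apply pow_le_pow_left₀ (abs_nonneg _)
    calc |fc x| = ‖fc x‖ := (Real.norm_eq_abs _).symm
      _ ≤ C := hC x hx
      _ ≤ max C 0 := le_max_left _ _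
  set c := fc x₀ with hc
  have hintc : IntegrableOn (fun _ : Euc d => c ^ 2) σ μ :=
    integrableOn_const hμ
  have hexp : ∫ x in σ, (fc x - c) ^ 2 ∂μ
      = ∫ x in σ, fc x ^ 2 ∂μ + c ^ 2 * (μ σ).toReal := by
    have hpt : ∀ x, (fc x - c) ^ 2 = (fc x ^ 2 - (2 * c) * fc x) + c ^ 2 := by
      intro x; ring
    simp only [hpt]
    have hi3 : IntegrableOn (fun x => fc x ^ 2 - 2 * c * fc x) σ μ := by
      exact hint2.sub (hint1.const_mul (2 * c))
    rw [integral_add hi3 hintc, integral_sub hint2 (hint1.const_mul (2 * c)),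
      MeasureTheory.integral_const_mul, h0, setIntegral_const]
    simp [mul_comm, Measure.real]
  have hbound : ∫ x in σ, (fc x - c) ^ 2 ∂μ ≤ (‖G‖ * Metric.diam σ) ^ 2 * (μ σ).toReal := by
    have h1 : ‖∫ x in σ, (fc x - c) ^ 2 ∂μ‖ ≤ (‖G‖ * Metric.diam σ) ^ 2 * (μ σ).toReal := by
      apply norm_setIntegral_le_of_norm_le_const hμ.lt_top
      · intro x hx
        rw [Real.norm_eq_abs, abs_pow]
        apply pow_le_pow_left₀ (abs_nonneg _)
        have hdiff2 : fc x - c = (inner ℝ G (x - x₀) : ℝ) := by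
          simp [hfc, hc, affFn, inner_sub_right]
        rw [hdiff2]
        calc |(inner ℝ G (x - x₀) : ℝ)| ≤ ‖G‖ * ‖x - x₀‖ := abs_real_inner_le_norm G _
          _ ≤ ‖G‖ * Metric.diam σ := by
              apply mul_le_mul_of_nonneg_left _ (norm_nonneg G)
              rw [← dist_eq_norm]
              exact Metric.dist_le_diam_of_mem hσc.isBounded hx hx₀
    calc ∫ x in σ, (fc x - c) ^ 2 ∂μ ≤ ‖∫ x in σ, (fc x - c) ^ 2 ∂μ‖ := le_abs_self _
      _ ≤ _ := h1
  have hc2 : 0 ≤ c ^ 2 * (μ σ).toReal := by positivity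
  linarith [hexp ▸ hbound]

lemma face_term_le {n : ℕ} (hn1 : 1 ≤ n) (p : Fin (n + 1 + 1) → Euc (n + 1))
    (i : Fin (n + 1 + 1)) (G : Euc (n + 1)) (B : ℝ)
    (h0 : ∫ x in faceSet p i, affFn G B x ∂μH[((n + 1 : ℕ) : ℝ) - 1] = 0) :
    (1 / Metric.diam (faceSet p i)) *
        ∫ x in faceSet p i, (affFn G B x) ^ 2 ∂μH[((n + 1 : ℕ) : ℝ) - 1]
      ≤ (n : ℝ) ^ n * Metric.diam (faceSet p i) ^ (n + 1) * ‖G‖ ^ 2 := by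
  set μ : Measure (Euc (n + 1)) := μH[((n + 1 : ℕ) : ℝ) - 1] with hμdef
  set σ := faceSet p i with hσ
  set h := Metric.diam σ with hh
  have hh0 : 0 ≤ h := Metric.diam_nonneg
  have hμle : μ σ ≤ ENNReal.ofReal ((n * h) ^ n) := faceSet_hmeas_le p i
  have hμfin : μ σ ≠ ⊤ := (lt_of_le_of_lt hμle ENNReal.ofReal_lt_top).ne
  have hμreal : (μ σ).toReal ≤ (n * h) ^ n := by
    calc (μ σ).toReal ≤ (ENNReal.ofReal ((n * h) ^ n)).toReal :=
          ENNReal.toReal_mono ENNReal.ofReal_ne_top hμle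
      _ = (n * h) ^ n := ENNReal.toReal_ofReal (by positivity)
  have hc : IsCompact σ := faceSet_isCompact p i
  have hintpos : 0 ≤ ∫ x in σ, (affFn G B x) ^ 2 ∂μ :=
    setIntegral_nonneg hc.isClosed.measurableSet (fun x _ => sq_nonneg _)
  have hintle : ∫ x in σ, (affFn G B x) ^ 2 ∂μ ≤ (n * h) ^ n * (‖G‖ * h) ^ 2 := by
    calc ∫ x in σ, (affFn G B x) ^ 2 ∂μ ≤ (μ σ).toReal * (‖G‖ * h) ^ 2 :=
          sq_int_le_of_zero_mean μ σ hc hμfin G B h0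
      _ ≤ (n * h) ^ n * (‖G‖ * h) ^ 2 :=
          mul_le_mul_of_nonneg_right hμreal (by positivity)
  rcases eq_or_lt_of_le hh0 with hzero | hpos
  · have hn' : (0:ℝ) < n := by exact_mod_cast hn1
    have : ∫ x in σ, (affFn G B x) ^ 2 ∂μ = 0 := by
      apply le_antisymm _ hintpos
      calc ∫ x in σ, (affFn G B x) ^ 2 ∂μ ≤ (n * h) ^ n * (‖G‖ * h) ^ 2 := hintle
        _ = 0 := by rw [← hzero]; simp
    rw [this, mul_zero, ← hzero]
    positivity
  · rw [div_mul_eq_mul_div, one_mul, div_le_iff₀ hpos]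
    calc ∫ x in σ, (affFn G B x) ^ 2 ∂μ ≤ (n * h) ^ n * (‖G‖ * h) ^ 2 := hintle
      _ = (n : ℝ) ^ n * h ^ (n + 1) * ‖G‖ ^ 2 * h := by rw [mul_pow, mul_pow]; ring

lemma sum_proj_le {γ δ : Type*} (s : Finset γ) (t : Finset δ) (Φ : γ → δ)
    (hinj : ∀ x ∈ s, ∀ y ∈ s, Φ x = Φ y → x = y) (hsub : ∀ x ∈ s, Φ x ∈ t)
    (f : δ → ℝ) (hf : ∀ y, 0 ≤ f y) :
    ∑ x ∈ s, f (Φ x) ≤ ∑ y ∈ t, f y := by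
  classical
  rw [← Finset.sum_image hinj]
  apply Finset.sum_le_sum_of_subset_of_nonneg
  · intro y hy
    obtain ⟨x, hx, rfl⟩ := Finset.mem_image.1 hy
    exact hsub x hx
  · intro y _ _
    exact hf y

end


/-- Jump estimate for Crouzeix–Raviart functions:
`Σ_σ (1/h_σ) ∫_σ [v]² ≤ c(θ₀) Σ_K ∫_K |∇v|²`. -/
theorem cr_jump_estimate (d : ℕ) (hd : d = 2 ∨ d = 3) (θ0 : ℝ) (hθ0 : 0 < θ0) :
    ∃ c : ℝ, 0 < c ∧
      ∀ (Ω : Set (Euc d)) (M : Mesh d Ω), M.Regular θ0 →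
        ∀ (g : (Fin (d + 1) → Euc d) → Euc d) (b : (Fin (d + 1) → Euc d) → ℝ),
          M.CRContinuous g b → M.CRBoundary g b →
          ∀ J : Set (Euc d) → ℝ,
            (∀ σ ∈ M.faces, M.InternalFace σ →
              ∀ p ∈ M.cells, ∀ q ∈ M.cells, p ≠ q →
                (∃ i, σ = faceSet p i) → (∃ j, σ = faceSet q j) →
                J σ = ∫ x in σ,
                  (affFn (g p) (b p) x - affFn (g q) (b q) x) ^ 2 ∂μH[(d : ℝ) - 1]) →
            (∀ σ ∈ M.faces, ¬ M.InternalFace σ →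
              ∀ p ∈ M.cells, (∃ i, σ = faceSet p i) →
                J σ = ∫ x in σ, (affFn (g p) (b p) x) ^ 2 ∂μH[(d : ℝ) - 1]) →
            ∑ σ ∈ M.faces, (1 / Metric.diam σ) * J σ ≤ c * M.brokenSq g := by
  obtain ⟨n, rfl, hn1⟩ : ∃ n, d = n + 1 ∧ 1 ≤ n := by
    rcases hd with h | h <;> subst h
    · exact ⟨1, rfl, le_refl 1⟩
    · exact ⟨2, rfl, one_le_two⟩
  have hnpos : (0:ℝ) < n := by exact_mod_cast hn1
  set cb := (volume (Metric.ball (0 : Euc (n + 1)) 1)).toReal with hcb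
  have hcbpos : 0 < cb :=
    ENNReal.toReal_pos (Metric.measure_ball_pos volume 0 one_pos).ne' measure_ball_lt_top.ne
  set C0 : ℝ := 2 * (n : ℝ) ^ n * (2 / θ0) ^ (n + 1) / cb with hC0
  have hC0pos : 0 < C0 := by positivity
  refine ⟨2 * (n + 1 + 1) * C0, by positivity, ?_⟩
  intro Ω M hreg g b hcr hbdry J hJint hJbd
  classical
  set a : (Fin (n + 1 + 1) → Euc (n + 1)) → ℝ :=
    fun r => C0 * (volume (cellSet r)).toReal * ‖g r‖ ^ 2 with ha
  have ha0 : ∀ r, 0 ≤ a r := fun r => by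
    rw [ha]
    positivity
  have hcellvol : ∀ r ∈ M.cells,
      Metric.diam (cellSet r) ^ (n + 1) ≤
        (volume (cellSet r)).toReal * (2 / θ0) ^ (n + 1) / cb := by
    intro r hr
    obtain ⟨x, hx⟩ := hreg.1 r hr
    exact vol_cell_lower θ0 hθ0 r x hx
  have hcore : ∀ (p q : Fin (n+1+1) → Euc (n+1)) (i j : Fin (n+1+1)),
      p ∈ M.cells → q ∈ M.cells → ∀ (G : Euc (n+1)) (B : ℝ),
      faceSet p i = faceSet q j →
      (∫ x in faceSet p i, affFn G B x ∂μH[((n + 1 : ℕ) : ℝ) - 1] = 0) →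
      ‖G‖^2 ≤ 2 * ‖g p‖^2 + 2 * ‖g q‖^2 →
      (1 / Metric.diam (faceSet p i)) *
          ∫ x in faceSet p i, (affFn G B x) ^ 2 ∂μH[((n + 1 : ℕ) : ℝ) - 1] ≤ a p + a q := by
    intro p q i j hp hq G B hfeq h0 hG2
    have hterm := face_term_le hn1 p i G B h0
    set D := Metric.diam (faceSet p i) ^ (n+1) with hD
    have hD0 : (0:ℝ) ≤ D := by positivity
    have hdp : D ≤ (volume (cellSet p)).toReal * (2 / θ0) ^ (n + 1) / cb :=
      le_trans (pow_le_pow_left₀ Metric.diam_nonneg (diam_faceSet_le p i) (n+1)) (hcellvol p hp)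
    have hdq : D ≤ (volume (cellSet q)).toReal * (2 / θ0) ^ (n + 1) / cb := by
      refine le_trans (pow_le_pow_left₀ Metric.diam_nonneg ?_ (n+1)) (hcellvol q hq)
      rw [hfeq]
      exact diam_faceSet_le q j
    refine le_trans hterm ?_
    have hnn : (0:ℝ) ≤ (n:ℝ)^n := by positivity
    have s1 : (n:ℝ)^n * D * ‖G‖^2 ≤ (n:ℝ)^n * D * (2*‖g p‖^2 + 2*‖g q‖^2) :=
      mul_le_mul_of_nonneg_left hG2 (by positivity)
    have s2 : D * ‖g p‖^2 ≤ ((volume (cellSet p)).toReal * (2 / θ0) ^ (n + 1) / cb) * ‖g p‖^2 :=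
      mul_le_mul_of_nonneg_right hdp (by positivity)
    have s3 : D * ‖g q‖^2 ≤ ((volume (cellSet q)).toReal * (2 / θ0) ^ (n + 1) / cb) * ‖g q‖^2 :=
      mul_le_mul_of_nonneg_right hdq (by positivity)
    have hfin : a p + a q = 2*(n:ℝ)^n *
        (((volume (cellSet p)).toReal * (2 / θ0) ^ (n + 1) / cb) * ‖g p‖^2 +
         ((volume (cellSet q)).toReal * (2 / θ0) ^ (n + 1) / cb) * ‖g q‖^2) := by
      rw [ha, hC0]
      ring
    nlinarith [s1, hfin, mul_le_mul_of_nonneg_left s2 hnn, mul_le_mul_of_nonneg_left s3 hnn]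
  have hfacemem : ∀ σ ∈ M.faces, ∃ p, p ∈ M.cells ∧ ∃ i, σ = faceSet p i := by
    intro σ hσ
    simp only [Mesh.faces, Finset.mem_image, Finset.mem_product] at hσ
    obtain ⟨⟨p, i⟩, ⟨hp, _⟩, hface⟩ := hσ
    exact ⟨p, hp, i, hface.symm⟩
  have key : ∀ σ : Set (Euc (n + 1)), ∃ P Q : Fin (n+1+1) → Euc (n+1), ∃ iP jQ : Fin (n+1+1),
      σ ∈ M.faces → P ∈ M.cells ∧ Q ∈ M.cells ∧ σ = faceSet P iP ∧ σ = faceSet Q jQ ∧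
        (1 / Metric.diam σ) * J σ ≤ a P + a Q := by
    intro σ
    by_cases hσ : σ ∈ M.faces
    swap
    · exact ⟨fun _ => 0, fun _ => 0, 0, 0, fun h => absurd h hσ⟩
    obtain ⟨p, hp, i, hface⟩ := hfacemem σ hσ
    by_cases hintf : M.InternalFace σ
    · obtain ⟨p', hp', q', hq', hne, ⟨i', hi'⟩, ⟨j', hj'⟩⟩ := id hintf
      refine ⟨p', q', i', j', fun _ => ⟨hp', hq', hi', hj', ?_⟩⟩
      have hJ : J σ = ∫ x in σ,
          (affFn (g p') (b p') x - affFn (g q') (b q') x) ^ 2 ∂μH[((n + 1 : ℕ) : ℝ) - 1] :=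
        hJint σ hσ hintf p' hp' q' hq' hne ⟨i', hi'⟩ ⟨j', hj'⟩
      have haff : ∀ x : Euc (n+1), affFn (g p' - g q') (b p' - b q') x
          = affFn (g p') (b p') x - affFn (g q') (b q') x := by
        intro x
        simp [affFn, inner_sub_left]
        ring
      have hfeq : faceSet p' i' = faceSet q' j' := by rw [← hi', ← hj']
      have hσc : IsCompact (faceSet p' i') := faceSet_isCompact p' i'
      have hμfin : μH[((n + 1 : ℕ) : ℝ) - 1] (faceSet p' i') ≠ ⊤ :=
        (lt_of_le_of_lt (faceSet_hmeas_le p' i') ENNReal.ofReal_lt_top).ne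
      have h0 : ∫ x in faceSet p' i',
          affFn (g p' - g q') (b p' - b q') x ∂μH[((n + 1 : ℕ) : ℝ) - 1] = 0 := by
        have hcc := hcr p' hp' q' hq' i' j' hfeq
        have hint1 := affFn_integrableOn μH[((n + 1 : ℕ) : ℝ) - 1] _ hσc hμfin (g p') (b p')
        have hint2 := affFn_integrableOn μH[((n + 1 : ℕ) : ℝ) - 1] _ hσc hμfin (g q') (b q')
        simp only [haff]
        rw [integral_sub hint1 hint2, hcc, sub_self]
      have hG2 : ‖g p' - g q'‖^2 ≤ 2*‖g p'‖^2 + 2*‖g q'‖^2 := by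
        have h := norm_sub_le (g p') (g q')
        nlinarith [sq_nonneg (‖g p'‖ - ‖g q'‖), norm_nonneg (g p' - g q')]
      rw [hJ, hi']
      simp only [← haff]
      exact hcore p' q' i' j' hp' hq' _ _ hfeq h0 hG2
    · refine ⟨p, p, i, i, fun _ => ⟨hp, hp, hface, hface, ?_⟩⟩
      have hJ : J σ = ∫ x in σ, (affFn (g p) (b p) x) ^ 2 ∂μH[((n + 1 : ℕ) : ℝ) - 1] :=
        hJbd σ hσ hintf p hp ⟨i, hface⟩
      have h0 : ∫ x in faceSet p i, affFn (g p) (b p) x ∂μH[((n + 1 : ℕ) : ℝ) - 1] = 0 :=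
        hbdry p hp i (by rw [← hface]; exact hintf)
      rw [hJ, hface]
      exact hcore p p i i hp hp (g p) (b p) rfl h0 (by nlinarith [sq_nonneg ‖g p‖])
  choose P Q iP jQ hPQ using key
  have hcount : ∀ (R : Set (Euc (n+1)) → (Fin (n+1+1) → Euc (n+1)))
      (I : Set (Euc (n+1)) → Fin (n+1+1)),
      (∀ σ ∈ M.faces, R σ ∈ M.cells ∧ σ = faceSet (R σ) (I σ)) →
      ∑ σ ∈ M.faces, a (R σ) ≤ (n + 1 + 1 : ℝ) * ∑ r ∈ M.cells, a r := by
    intro R I hRI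
    have hle := sum_proj_le M.faces (M.cells ×ˢ (Finset.univ : Finset (Fin (n+1+1))))
      (fun σ => (R σ, I σ))
      (fun σ hσ σ' hσ' hEq => by
        have e1 := (hRI σ hσ).2
        have e2 := (hRI σ' hσ').2
        rw [Prod.mk.injEq] at hEq
        rw [e1, e2, hEq.1, hEq.2])
      (fun σ hσ => Finset.mem_product.2 ⟨(hRI σ hσ).1, Finset.mem_univ _⟩)
      (fun x => a x.1) (fun y => ha0 _)
    refine le_trans hle (le_of_eq ?_)
    rw [Finset.sum_product, Finset.mul_sum]
    apply Finset.sum_congr rfl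
    intro r _
    have hconst : ∀ y : Fin (n+1+1), a (r, y).1 = a r := fun _ => rfl
    simp only [hconst]
    rw [Finset.sum_const, Finset.card_univ, Fintype.card_fin, nsmul_eq_mul]
    push_cast
    ring
  have hsum1 : ∑ σ ∈ M.faces, a (P σ) ≤ (n + 1 + 1 : ℝ) * ∑ r ∈ M.cells, a r :=
    hcount P iP (fun σ hσ => ⟨(hPQ σ hσ).1, (hPQ σ hσ).2.2.1⟩)
  have hsum2 : ∑ σ ∈ M.faces, a (Q σ) ≤ (n + 1 + 1 : ℝ) * ∑ r ∈ M.cells, a r :=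
    hcount Q jQ (fun σ hσ => ⟨(hPQ σ hσ).2.1, (hPQ σ hσ).2.2.2.1⟩)
  calc ∑ σ ∈ M.faces, (1 / Metric.diam σ) * J σ
      ≤ ∑ σ ∈ M.faces, (a (P σ) + a (Q σ)) :=
        Finset.sum_le_sum (fun σ hσ => (hPQ σ hσ).2.2.2.2)
    _ = ∑ σ ∈ M.faces, a (P σ) + ∑ σ ∈ M.faces, a (Q σ) := Finset.sum_add_distrib
    _ ≤ (n+1+1:ℝ) * ∑ r ∈ M.cells, a r + (n+1+1:ℝ) * ∑ r ∈ M.cells, a r :=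
        add_le_add hsum1 hsum2
    _ = 2 * (n+1+1:ℝ) * ∑ r ∈ M.cells, a r := by ring
    _ = 2 * ((n:ℝ) + 1 + 1) * C0 * M.brokenSq g := by
        rw [Mesh.brokenSq, Finset.mul_sum, Finset.mul_sum]
        apply Finset.sum_congr rfl
        intro r _
        rw [ha]
        ring
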